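/- For ρ > 0, the function K_ρ(u) = u·log(ρu/(1 − e^{−ρu})) − ρu²/2 on (0,1] satisfies K_ρ(u) < 0 for all u ∈ (0,1], K_ρ(u) → 0 as u → 0⁺, and K_ρ is strictly decreasing in u on (0,1]. -/
import Mathlib

open Real Set Filter

lemma aux_xcosh (x : ℝ) (hx : 0 < x) : Real.sinh x < x * Real.cosh x := by
  have h : StrictMonoOn (fun y : ℝ => y * Real.cosh y - Real.sinh y) (Ici 0) := by
    apply strictMonoOn_of_deriv_pos (convex_Ici 0)
    · fun_prop
    · intro y hy
      rw [interior_Ici, mem_Ioi] at hy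
      have h1 : HasDerivAt (fun y : ℝ => y * Real.cosh y - Real.sinh y)
          (1 * Real.cosh y + y * Real.sinh y - Real.cosh y) y :=
        ((hasDerivAt_id' y).mul (Real.hasDerivAt_cosh y)).sub (Real.hasDerivAt_sinh y)
      rw [h1.deriv]
      nlinarith [mul_pos hy (Real.sinh_pos_iff.2 hy)]
  have := h self_mem_Ici (mem_Ici.2 hx.le) hx
  simpa using this

/-- F x = log (sinh x) - log x -/
noncomputable def auxF (x : ℝ) : ℝ := Real.log (Real.sinh x) - Real.log x

lemma auxF_pos {x : ℝ} (hx : 0 < x) : 0 < auxF x := by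
  have h := Real.self_lt_sinh_iff.2 hx
  exact sub_pos.2 (Real.log_lt_log hx h)

lemma auxF_mono : StrictMonoOn auxF (Ioi 0) := by
  apply strictMonoOn_of_deriv_pos (convex_Ioi 0)
  · apply ContinuousOn.sub
    · exact (Real.continuousOn_log.comp Real.continuous_sinh.continuousOn
        (fun x hx => by simp [(Real.sinh_pos_iff.2 (mem_Ioi.1 hx)).ne']))
    · exact Real.continuousOn_log.mono (fun x hx => by simp [(mem_Ioi.1 hx).ne'])
  · intro y hy
    rw [interior_Ioi, mem_Ioi] at hy
    have hs : 0 < Real.sinh y := Real.sinh_pos_iff.2 hy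
    have h1 : HasDerivAt auxF (Real.cosh y / Real.sinh y - 1 / y) y := by
      have ha : HasDerivAt (fun y => Real.log (Real.sinh y)) (Real.cosh y / Real.sinh y) y := by
        have := (Real.hasDerivAt_sinh y).log hs.ne'
        simpa [div_eq_mul_inv] using this
      have hb : HasDerivAt Real.log (1 / y) y := by
        simpa [one_div] using Real.hasDerivAt_log hy.ne'
      exact ha.sub hb
    rw [h1.deriv]
    rw [sub_pos, div_lt_div_iff₀ hy hs]
    nlinarith [aux_xcosh y hy]

lemma key_identity (ρ u : ℝ) (hρ : 0 < ρ) (hu : 0 < u) :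
    u * Real.log (ρ * u / (1 - Real.exp (-(ρ * u)))) - ρ * u ^ 2 / 2
      = -(u * auxF (ρ * u / 2)) := by
  set x := ρ * u / 2 with hxdef
  have hx : 0 < x := by positivity
  have hs : 0 < Real.sinh x := Real.sinh_pos_iff.2 hx
  have h2x : ρ * u = 2 * x := by rw [hxdef]; ring
  have e1 : Real.exp (-x) * Real.exp x = 1 := by rw [← Real.exp_add]; simp
  have e2 : Real.exp (-x) * Real.exp (-x) = Real.exp (-(2*x)) := by
    rw [← Real.exp_add]; ring_nf
  have hden : 1 - Real.exp (-(ρ * u)) = 2 * Real.exp (-x) * Real.sinh x := by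
    rw [h2x, Real.sinh_eq]
    linear_combination e2 - e1
  have harg : ρ * u / (1 - Real.exp (-(ρ * u))) = x * Real.exp x / Real.sinh x := by
    rw [hden, h2x]
    rw [div_eq_div_iff (by positivity) hs.ne']
    linear_combination (-(2 * x * Real.sinh x)) * e1
  rw [harg, Real.log_div (by positivity) hs.ne', Real.log_mul hx.ne' (Real.exp_pos x).ne',
    Real.log_exp, auxF]
  have : ρ * u ^ 2 / 2 = u * x := by rw [hxdef]; ring
  rw [this]; ring

theorem stmt_6 (ρ : ℝ) (hρ : 0 < ρ) (K : ℝ → ℝ)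
    (hK : ∀ u : ℝ, 0 < u →
      K u = u * Real.log (ρ * u / (1 - Real.exp (-(ρ * u)))) - ρ * u ^ 2 / 2) :
    (∀ u ∈ Set.Ioc (0 : ℝ) 1, K u < 0) ∧
    Filter.Tendsto K (nhdsWithin 0 (Set.Ioi (0 : ℝ))) (nhds 0) ∧
    StrictAntiOn K (Set.Ioc (0 : ℝ) 1) := by
  have hK' : ∀ u : ℝ, 0 < u → K u = -(u * auxF (ρ * u / 2)) := fun u hu => by
    rw [hK u hu, key_identity ρ u hρ hu]
  refine ⟨?_, ?_, ?_⟩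
  · intro u hu
    rw [hK' u hu.1]
    have := auxF_pos (x := ρ * u / 2) (by have := hu.1; positivity)
    nlinarith [hu.1]
  · -- squeeze: -ρ u²/2 ≤ K u ≤ 0
    have hub : ∀ᶠ u in nhdsWithin 0 (Ioi (0:ℝ)), K u ≤ 0 := by
      filter_upwards [self_mem_nhdsWithin] with u hu
      rw [hK' u hu]
      have := auxF_pos (x := ρ * u / 2) (by have := mem_Ioi.1 hu; positivity)
      nlinarith [mem_Ioi.1 hu]
    have hlb : ∀ᶠ u in nhdsWithin 0 (Ioi (0:ℝ)),
        -(u * (Real.exp (ρ * u / 2) - 1)) ≤ K u := by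
      filter_upwards [self_mem_nhdsWithin] with u hu
      have hu' : (0:ℝ) < u := hu
      rw [hK' u hu']
      -- need u * auxF(x) ≤ ρ u² / 2 = u * x, i.e. auxF x ≤ x, i.e. sinh x ≤ x e^x
      set x := ρ * u / 2 with hxdef
      have hx : 0 < x := by positivity
      have hF : auxF x ≤ Real.exp x - 1 := by
        have hs : 0 < Real.sinh x := Real.sinh_pos_iff.2 hx
        have hle : Real.sinh x ≤ x * Real.exp x := by
          rw [Real.sinh_eq]
          have h1 : 1 - 2*x ≤ Real.exp (-(2*x)) := by
            have := Real.add_one_le_exp (-(2*x)); linarith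
          have h2 : Real.exp (-x) * Real.exp (-x) = Real.exp (-(2*x)) := by
            rw [← Real.exp_add]; ring_nf
          have h3 : Real.exp (-x) = Real.exp x * Real.exp (-(2*x)) := by
            rw [← Real.exp_add]; ring_nf
          nlinarith [Real.exp_pos x, Real.exp_pos (-x), Real.exp_pos (-(2*x))]
        calc auxF x = Real.log (Real.sinh x / x) := by rw [auxF, Real.log_div hs.ne' hx.ne']
          _ ≤ Real.sinh x / x - 1 := by
              have := Real.log_le_sub_one_of_pos (div_pos hs hx)
              linarith
          _ ≤ Real.exp x - 1 := by
              rw [sub_le_sub_iff_right, div_le_iff₀ hx]; nlinarith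
      have : u * auxF x ≤ u * (Real.exp x - 1) := mul_le_mul_of_nonneg_left hF hu'.le
      linarith
    have hc : Continuous fun u : ℝ => -(u * (Real.exp (ρ * u / 2) - 1)) := by continuity
    have h1 : Tendsto (fun u : ℝ => -(u * (Real.exp (ρ * u / 2) - 1)))
        (nhdsWithin 0 (Ioi (0:ℝ))) (nhds 0) := by
      have := (hc.tendsto 0).mono_left (nhdsWithin_le_nhds (s := Ioi (0:ℝ)))
      simpa using this
    exact tendsto_of_tendsto_of_tendsto_of_le_of_le' h1 tendsto_const_nhds hlb hub
  · intro a ha b hb hab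
    rw [hK' a ha.1, hK' b hb.1, neg_lt_neg_iff]
    have hFa := auxF_pos (x := ρ * a / 2) (by have := ha.1; positivity)
    have hFab : auxF (ρ * a / 2) < auxF (ρ * b / 2) := by
      apply auxF_mono (by have := ha.1; simp; positivity) (by have := hb.1; simp; positivity)
      nlinarith [ha.1]
    calc a * auxF (ρ * a / 2) < b * auxF (ρ * a / 2) := by nlinarith
      _ < b * auxF (ρ * b / 2) := by nlinarith [hb.1]
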